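/- arXiv:1511.07632 — 2 statements merged into one kernel-verified Lean document; each statement's English description precedes it below -/
import Mathlib

section
/- Let X be a Banach space with a 1-unconditional basis (e_m) with respect to which X is C-asymptotic ℓ_p, for some 1 ≤ p ≤ ∞ and C ≥ 1. Define the fast growing hierarchy g_0(n) = n + 1 and g_{k+1}(n) = g_k^{(n)}(n) (the n-fold iteration of g_k at n). Then for every k ≥ 0 and every n ≥ 1, any g_k(n) normalized block vectors of (e_m) with supports contained in (n, ∞) are C^{k+1}-equivalent to the unit vector basis of ℓ_p^{g_k(n)}; that is, if v_1,…,v_{g_k(n)} are norm-one vectors with n < supp(v_1) < supp(v_2) < ⋯ < supp(v_{g_k(n)}), then for all scalars a_1,…,a_{g_k(n)}: C^{-(k+1)}(Σ_i |a_i|^p)^{1/p} ≤ ‖Σ_i a_i v_i‖ ≤ C^{k+1}(Σ_i |a_i|^p)^{1/p} (max norm when p = ∞). -/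
open Filter Topology Set
open scoped ENNReal NNReal

noncomputable section

/-- The `ε`-Szlenk derivation of a subset of the dual space, w.r.t. the weak* topology. -/
def szlenkDeriv {X : Type*} [NormedAddCommGroup X] [NormedSpace ℝ X] (ε : ℝ)
    (K : Set (StrongDual ℝ X)) : Set (StrongDual ℝ X) :=
  {f | f ∈ K ∧ ∀ U : Set (WeakDual ℝ X), IsOpen U →
    StrongDual.toWeakDual f ∈ U →
    ε < Metric.diam {g | g ∈ K ∧ StrongDual.toWeakDual g ∈ U}}

/-- Iterated Szlenk derivations `ι_{ε₁}⋯ι_{εₙ} K` for a list `[ε₁, …, εₙ]`. -/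
def szlenkDerivList {X : Type*} [NormedAddCommGroup X] [NormedSpace ℝ X] (l : List ℝ)
    (K : Set (StrongDual ℝ X)) : Set (StrongDual ℝ X) :=
  l.foldr szlenkDeriv K

/-- The closed unit ball of the dual space. -/
def dualUnitBall (X : Type*) [NormedAddCommGroup X] [NormedSpace ℝ X] :
    Set (StrongDual ℝ X) :=
  Metric.closedBall 0 1

/-- `X` has summable Szlenk index with constant `M`. -/
def HasSummableSzlenkWith (X : Type*) [NormedAddCommGroup X] [NormedSpace ℝ X] (M : ℝ) : Prop :=
  ∀ l : List ℝ, (∀ ε ∈ l, 0 < ε) → (szlenkDerivList l (dualUnitBall X)).Nonempty → l.sum ≤ M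

/-- `X` has summable Szlenk index. -/
def HasSummableSzlenk (X : Type*) [NormedAddCommGroup X] [NormedSpace ℝ X] : Prop :=
  ∃ M > 0, HasSummableSzlenkWith X M

/-- When some finite iterate of the Szlenk derivation kills the dual ball, the ε-Szlenk index
`Sz(X, ε)` is the least `n : ℕ` with `ι_ε^n B_{X*} = ∅`. -/
def szlenkIdx (X : Type*) [NormedAddCommGroup X] [NormedSpace ℝ X] (ε : ℝ) : ℕ :=
  sInf {n : ℕ | (szlenkDeriv ε)^[n] (dualUnitBall X) = ∅}

/-- `Sz(X) ≤ ω`: the ε-Szlenk index is finite for every ε > 0. -/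
def SzlenkLeOmega (X : Type*) [NormedAddCommGroup X] [NormedSpace ℝ X] : Prop :=
  ∀ ε : ℝ, 0 < ε → ∃ n : ℕ, (szlenkDeriv ε)^[n] (dualUnitBall X) = ∅

/-- `Sz(X) = ω`: finite ε-Szlenk indices, unbounded as ε → 0. -/
def SzlenkEqOmega (X : Type*) [NormedAddCommGroup X] [NormedSpace ℝ X] : Prop :=
  SzlenkLeOmega X ∧ ∀ N : ℕ, ∃ ε : ℝ, 0 < ε ∧ ((szlenkDeriv ε)^[N] (dualUnitBall X)).Nonempty

/-- `X` has Szlenk power type `v`: `log Sz(X,ε)/|log ε| → v` as `ε → 0⁺`. -/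
def HasSzlenkPowerType (X : Type*) [NormedAddCommGroup X] [NormedSpace ℝ X] (v : ℝ) : Prop :=
  Tendsto (fun ε : ℝ => Real.log (szlenkIdx X ε) / |Real.log ε|) (𝓝[>] (0:ℝ)) (𝓝 v)

/-- `(Σᵢ |a i|^p)^{1/p}`, the maximum of the `|a i|` when `p = ∞`. -/
def pNorm (p : ℝ≥0∞) {ι : Type*} [Fintype ι] (a : ι → ℝ) : ℝ :=
  if p = ∞ then ((Finset.univ.sup fun i => ‖a i‖₊ : ℝ≥0) : ℝ)
  else (∑ i, |a i| ^ p.toReal) ^ (1 / p.toReal)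

/-- A normed space `Z` with coordinate functionals `coord` is `C`-asymptotic `ℓ_p`:
every block sequence `x₁, …, xₙ` of finitely supported vectors with successive supports
contained in `[n, ∞)` (1-based basis indexing; index `m : ℕ` is the `(m+1)`-st basis vector)
satisfies `C⁻¹ (Σ‖xⱼ‖^p)^{1/p} ≤ ‖Σ xⱼ‖ ≤ C (Σ‖xⱼ‖^p)^{1/p}`. -/
def IsAsymptoticLp (p : ℝ≥0∞) (C : ℝ) {Z : Type*} [NormedAddCommGroup Z]
    (coord : ℕ → Z → ℝ) : Prop :=
  ∀ (n : ℕ) (x : Fin n → Z),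
    (∀ j, {m | coord m (x j) ≠ 0}.Finite) →
    (∀ j m, coord m (x j) ≠ 0 → n ≤ m + 1) →
    (∀ (j k : Fin n), j < k → ∀ m m', coord m (x j) ≠ 0 → coord m' (x k) ≠ 0 → m < m') →
    C⁻¹ * pNorm p (fun j => ‖x j‖) ≤ ‖∑ j, x j‖ ∧
      ‖∑ j, x j‖ ≤ C * pNorm p (fun j => ‖x j‖)

/-- `(e, e')` is a 1-unconditional Schauder basis of `E` with biorthogonal functionals `e'`. -/
structure IsBasis1Unconditional {E : Type*} [NormedAddCommGroup E] [NormedSpace ℝ E]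
    (e : ℕ → E) (e' : ℕ → StrongDual ℝ E) : Prop where
  biorth : ∀ m n, e' m (e n) = if m = n then 1 else 0
  expansion : ∀ x : E, HasSum (fun n => e' n x • e n) x
  unconditional : ∀ (x : E) (σ : ℕ → ℝ), (∀ n, σ n = 1 ∨ σ n = -1) →
    ∃ y : E, HasSum (fun n => (σ n * e' n x) • e n) y ∧ ‖y‖ = ‖x‖

/-- The basis `e` of `E` is shrinking: the norm of the restriction of any functional to the
closed span of the tail of the basis tends to `0`. -/
def ShrinkingBasis {E : Type*} [NormedAddCommGroup E] [NormedSpace ℝ E] (e : ℕ → E) : Prop :=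
  ∀ f : StrongDual ℝ E,
    Tendsto (fun k =>
      ‖f.comp ((Submodule.span ℝ (e '' Set.Ici k)).topologicalClosure).subtypeL‖)
      atTop (𝓝 0)

/-- `T` realizes `Y` as the `E`-direct sum `(⊕ₙ Xₙ)_E` with respect to the basis `e`. -/
structure IsDirectSumE {E : Type*} [NormedAddCommGroup E] [NormedSpace ℝ E] (e : ℕ → E)
    (X : ℕ → Type*) [∀ n, NormedAddCommGroup (X n)] [∀ n, NormedSpace ℝ (X n)]
    {Y : Type*} [NormedAddCommGroup Y] [NormedSpace ℝ Y]
    (T : Y →ₗ[ℝ] ∀ n, X n) : Prop where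
  range_eq : Set.range T = {x | Summable fun n => ‖x n‖ • e n}
  norm_eq : ∀ y, ‖y‖ = ‖∑' n, ‖T y n‖ • e n‖

/-- `T` realizes `Y` as the c₀-sum `(⊕ₙ Xₙ)_{c₀}`. -/
structure IsC0Sum (X : ℕ → Type*) [∀ n, NormedAddCommGroup (X n)] [∀ n, NormedSpace ℝ (X n)]
    {Y : Type*} [NormedAddCommGroup Y] [NormedSpace ℝ Y] (T : Y →ₗ[ℝ] ∀ n, X n) : Prop where
  range_eq : Set.range T = {x | Tendsto (fun n => ‖x n‖) atTop (𝓝 0)}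
  norm_eq : ∀ y, ‖y‖ = ⨆ n, ‖T y n‖

/-- `T` realizes `Y` as the `ℓ_p`-sum `(⊕ₙ Xₙ)_{ℓ_p}`. -/
structure IsLpSum (p : ℝ) (X : ℕ → Type*) [∀ n, NormedAddCommGroup (X n)]
    [∀ n, NormedSpace ℝ (X n)] {Y : Type*} [NormedAddCommGroup Y] [NormedSpace ℝ Y]
    (T : Y →ₗ[ℝ] ∀ n, X n) : Prop where
  range_eq : Set.range T = {x | Summable fun n => ‖x n‖ ^ p}
  norm_eq : ∀ y, ‖y‖ = (∑' n, ‖T y n‖ ^ p) ^ (1/p)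

/-- `ν` is a norm on `X`. -/
structure IsNormOn {X : Type*} [NormedAddCommGroup X] [NormedSpace ℝ X] (ν : X → ℝ) : Prop where
  add_le : ∀ x y, ν (x + y) ≤ ν x + ν y
  smul_eq : ∀ (a : ℝ) (x : X), ν (a • x) = |a| * ν x
  eq_zero_iff : ∀ x : X, ν x = 0 ↔ x = 0

/-- The dual norm on `X*` corresponding to the (equivalent) norm `ν` on `X`. -/
def dualNormOf {X : Type*} [NormedAddCommGroup X] [NormedSpace ℝ X]
    (ν : X → ℝ) (f : StrongDual ℝ X) : ℝ :=
  sSup {r | ∃ x : X, ν x ≤ 1 ∧ r = |f x|}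

/-- `sup_n C_q(X_n) < ∞`: a common constant `c` with `Sz(Xₙ, ε) ≤ c ε^{-q}`. -/
def PowerTypeBddWith (X : ℕ → Type*) [∀ n, NormedAddCommGroup (X n)]
    [∀ n, NormedSpace ℝ (X n)] (q : ℝ) : Prop :=
  ∃ c : ℝ, ∀ n, ∀ ε ∈ Set.Ioo (0:ℝ) 1, (szlenkIdx (X n) ε : ℝ) ≤ c * ε ^ (-q)

/-- The fast growing hierarchy: `g 0 n = n + 1`, `g (k+1) n = (g k)^[n] n`. -/
def fastGrowing : ℕ → ℕ → ℕ
  | 0, n => n + 1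
  | k+1, n => (fastGrowing k)^[n] n

end


namespace AuxFG

open Finset

/-! ### Facts about `fastGrowing` -/

lemma le_iterate {f : ℕ → ℕ} (hf : ∀ t, t ≤ f t) : ∀ (j t : ℕ), t ≤ f^[j] t
  | 0, _ => le_refl _
  | (j+1), t => by
      rw [Function.iterate_succ_apply]
      exact (hf t).trans (le_iterate hf j (f t))

lemma fg_le_self : ∀ (k t : ℕ), t ≤ fastGrowing k t
  | 0, t => Nat.le_succ t
  | (k+1), t => by
      show t ≤ (fastGrowing k)^[t] t
      exact le_iterate (fg_le_self k) t t

lemma fg_mono : ∀ k, Monotone (fastGrowing k)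
  | 0 => fun _ _ h => Nat.succ_le_succ h
  | (k+1) => by
      intro a b hab
      obtain ⟨d, rfl⟩ := Nat.exists_eq_add_of_le hab
      show (fastGrowing k)^[a] a ≤ (fastGrowing k)^[a+d] (a+d)
      calc (fastGrowing k)^[a] a
          ≤ (fastGrowing k)^[a] ((fastGrowing k)^[d] (a+d)) :=
            ((fg_mono k).iterate a)
              ((Nat.le_add_right a d).trans (le_iterate (fg_le_self k) d (a+d)))
        _ = (fastGrowing k)^[a+d] (a+d) := (Function.iterate_add_apply _ a d _).symm

/-! ### The truncated `ℓ_p` norm on `ℕ`-indexed families -/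

noncomputable def pNR (p : ℝ≥0∞) (N : ℕ) (b : ℕ → ℝ) : ℝ :=
  if p = ∞ then (((Finset.range N).sup fun i => ‖b i‖₊ : ℝ≥0) : ℝ)
  else (∑ i ∈ Finset.range N, |b i| ^ p.toReal) ^ (1 / p.toReal)

lemma toReal_pos {p : ℝ≥0∞} (hp : 1 ≤ p) (hp' : p ≠ ∞) : 0 < p.toReal :=
  ENNReal.toReal_pos (fun h => by simp [h] at hp) hp'

lemma pNR_nonneg (p : ℝ≥0∞) (N : ℕ) (b : ℕ → ℝ) : 0 ≤ pNR p N b := by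
  unfold pNR; split_ifs with h
  · exact NNReal.coe_nonneg _
  · exact Real.rpow_nonneg
      (Finset.sum_nonneg fun i _ => Real.rpow_nonneg (abs_nonneg _) _) _

lemma pNR_zero {p : ℝ≥0∞} (hp : 1 ≤ p) (b : ℕ → ℝ) : pNR p 0 b = 0 := by
  unfold pNR; split_ifs with h
  · simp
  · rw [Finset.range_zero, Finset.sum_empty, Real.zero_rpow]
    exact one_div_ne_zero (toReal_pos hp h).ne'

lemma pNR_mono {p : ℝ≥0∞} (hp : 1 ≤ p) {N : ℕ} {b c : ℕ → ℝ}
    (h : ∀ i, i < N → |b i| ≤ c i) : pNR p N b ≤ pNR p N c := by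
  unfold pNR; split_ifs with hpt
  · apply NNReal.coe_le_coe.mpr
    apply Finset.sup_mono_fun
    intro i hi
    rw [← NNReal.coe_le_coe, coe_nnnorm, coe_nnnorm, Real.norm_eq_abs, Real.norm_eq_abs]
    exact (h i (Finset.mem_range.mp hi)).trans (le_abs_self _)
  · apply Real.rpow_le_rpow
      (Finset.sum_nonneg fun i _ => Real.rpow_nonneg (abs_nonneg _) _)
    · exact Finset.sum_le_sum fun i hi => Real.rpow_le_rpow (abs_nonneg _)
        ((h i (Finset.mem_range.mp hi)).trans (le_abs_self _)) (toReal_pos hp hpt).le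
    · positivity

lemma pNR_smul {p : ℝ≥0∞} (hp : 1 ≤ p) {c : ℝ} (hc : 0 ≤ c) (N : ℕ) (b : ℕ → ℝ) :
    pNR p N (fun i => c * b i) = c * pNR p N b := by
  unfold pNR; split_ifs with hpt
  · have h1 : (fun i => ‖c * b i‖₊) = fun i => ‖c‖₊ * ‖b i‖₊ :=
      funext fun i => nnnorm_mul _ _
    rw [h1, ← NNReal.mul_finset_sup, NNReal.coe_mul, coe_nnnorm, Real.norm_of_nonneg hc]
  · have ht := toReal_pos hp hpt
    have h1 : ∀ i, |c * b i| ^ p.toReal = c ^ p.toReal * |b i| ^ p.toReal := fun i => by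
      rw [abs_mul, abs_of_nonneg hc, Real.mul_rpow hc (abs_nonneg _)]
    simp only [h1, ← Finset.mul_sum]
    rw [Real.mul_rpow (Real.rpow_nonneg hc _)
        (Finset.sum_nonneg fun i _ => Real.rpow_nonneg (abs_nonneg _) _),
      ← Real.rpow_mul hc, mul_one_div_cancel ht.ne', Real.rpow_one]

noncomputable def comb (p : ℝ≥0∞) (x y : ℝ) : ℝ :=
  if p = ∞ then max x y else (x ^ p.toReal + y ^ p.toReal) ^ (1 / p.toReal)

lemma rpow_one_div_rpow {p : ℝ≥0∞} (hp : 1 ≤ p) (hpt : p ≠ ∞) {Y : ℝ} (hY : 0 ≤ Y) :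
    (Y ^ (1 / p.toReal)) ^ p.toReal = Y := by
  rw [← Real.rpow_mul hY, one_div_mul_cancel (toReal_pos hp hpt).ne', Real.rpow_one]

lemma pNR_succ {p : ℝ≥0∞} (hp : 1 ≤ p) {N : ℕ} {G : ℕ → ℝ} (hG : 0 ≤ G N) :
    pNR p (N + 1) G = comb p (pNR p N G) (G N) := by
  unfold pNR comb; split_ifs with hpt
  · rw [Finset.range_add_one, Finset.sup_insert, NNReal.coe_max, coe_nnnorm,
      Real.norm_of_nonneg hG, max_comm]
  · rw [Finset.sum_range_succ,
      rpow_one_div_rpow hp hpt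
        (Finset.sum_nonneg fun i _ => Real.rpow_nonneg (abs_nonneg _) _),
      abs_of_nonneg hG]

lemma sup_range_add {α : Type*} [SemilatticeSup α] [OrderBot α] (f : ℕ → α) (a : ℕ) :
    ∀ d, (Finset.range (a + d)).sup f
      = (Finset.range a).sup f ⊔ (Finset.range d).sup (fun i => f (a + i))
  | 0 => by simp
  | (d+1) => by
      rw [← Nat.add_assoc, Finset.range_add_one, Finset.sup_insert,
        Finset.range_add_one (n := d), Finset.sup_insert, sup_range_add f a d, sup_left_comm]

lemma pNR_split {p : ℝ≥0∞} (hp : 1 ≤ p) {a N : ℕ} (h : a ≤ N) (b : ℕ → ℝ) :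
    pNR p N b = comb p (pNR p a b) (pNR p (N - a) (fun i => b (a + i))) := by
  obtain ⟨d, rfl⟩ := Nat.exists_eq_add_of_le h
  have hd : a + d - a = d := by omega
  unfold pNR comb; split_ifs with hpt
  · rw [hd, sup_range_add (fun i => ‖b i‖₊) a d, NNReal.coe_max]
  · rw [hd, Finset.sum_range_add,
      rpow_one_div_rpow hp hpt
        (Finset.sum_nonneg fun i _ => Real.rpow_nonneg (abs_nonneg _) _),
      rpow_one_div_rpow hp hpt
        (Finset.sum_nonneg fun i _ => Real.rpow_nonneg (abs_nonneg _) _)]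

lemma pNR_nested {p : ℝ≥0∞} (hp : 1 ≤ p) (b : ℕ → ℝ) :
    ∀ (m : ℕ) (u : ℕ → ℕ), u 0 = 0 → (∀ j, u j ≤ u (j+1)) →
      pNR p m (fun j => pNR p (u (j+1) - u j) (fun i => b (u j + i))) = pNR p (u m) b
  | 0, u, h0, _ => by rw [h0, pNR_zero hp, pNR_zero hp]
  | (m+1), u, h0, hu => by
      have hmon : Monotone u := monotone_nat_of_le_succ hu
      rw [pNR_succ hp (pNR_nonneg _ _ _), pNR_nested hp b m u h0 hu,
        ← pNR_split hp (hmon (Nat.le_succ m)) b]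

lemma pNorm_eq_pNR (p : ℝ≥0∞) (N : ℕ) (b : ℕ → ℝ) :
    pNorm p (fun j : Fin N => b ↑j) = pNR p N b := by
  unfold pNorm pNR; split_ifs with hpt
  · congr 1
    apply le_antisymm
    · exact Finset.sup_le fun j _ =>
        Finset.le_sup (f := fun i => ‖b i‖₊) (Finset.mem_range.mpr j.isLt)
    · exact Finset.sup_le fun i hi =>
        Finset.le_sup (f := fun j : Fin N => ‖b ↑j‖₊)
          (Finset.mem_univ (⟨i, Finset.mem_range.mp hi⟩ : Fin N))
  · rw [Fin.sum_univ_eq_sum_range (fun i => |b i| ^ p.toReal) N]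

lemma sum_Ico_tele {M : Type*} [AddCommMonoid M] (f : ℕ → M) (u : ℕ → ℕ) (hu : Monotone u) :
    ∀ m, ∑ j ∈ Finset.range m, (∑ i ∈ Finset.Ico (u j) (u (j+1)), f i)
      = ∑ i ∈ Finset.Ico (u 0) (u m), f i
  | 0 => by simp
  | (m+1) => by
      rw [Finset.sum_range_succ, sum_Ico_tele f u hu m,
        Finset.sum_Ico_consecutive f (hu (Nat.zero_le m)) (hu (Nat.le_succ m))]

/-! ### The main induction -/

lemma main {X : Type*} [NormedAddCommGroup X] [NormedSpace ℝ X]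
    (e' : ℕ → StrongDual ℝ X) (p : ℝ≥0∞) (hp : 1 ≤ p) (C : ℝ) (hC : 1 ≤ C)
    (hasym : IsAsymptoticLp p C (fun m x => e' m x)) :
    ∀ (k m N : ℕ), 1 ≤ m → N ≤ fastGrowing k m → ∀ x : ℕ → X,
      (∀ i, i < N → {μ | e' μ (x i) ≠ 0}.Finite) →
      (∀ i, i < N → ∀ μ, e' μ (x i) ≠ 0 → m + i ≤ μ) →
      (∀ i j, i < j → j < N → ∀ μ μ', e' μ (x i) ≠ 0 → e' μ' (x j) ≠ 0 → μ < μ') →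
      (C ^ (k+1))⁻¹ * pNR p N (fun i => ‖x i‖) ≤ ‖∑ i ∈ Finset.range N, x i‖ ∧
        ‖∑ i ∈ Finset.range N, x i‖ ≤ C ^ (k+1) * pNR p N (fun i => ‖x i‖) := by
  intro k
  induction k with
  | zero =>
      intro m N hm hN x hfin hsupp hsucc
      have hN' : N ≤ m + 1 := hN
      have h := hasym N (fun j : Fin N => x ↑j)
        (fun j => hfin ↑j j.isLt)
        (fun j μ hμ => by
          have h1 : m + (↑j : ℕ) ≤ μ := hsupp ↑j j.isLt μ hμ
          omega)
        (fun j j' hjj' μ μ' h1 h2 => hsucc ↑j ↑j' hjj' j'.isLt μ μ' h1 h2)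
      rw [Fin.sum_univ_eq_sum_range x N, pNorm_eq_pNR p N (fun i => ‖x i‖)] at h
      simpa [pow_one] using h
  | succ k ih =>
      intro m N hm hN x hfin hsupp hsucc
      obtain ⟨s, hs0, hsstep⟩ : ∃ s : ℕ → ℕ,
          s 0 = 0 ∧ ∀ j, s (j+1) = s j + fastGrowing k (m + s j) := by
        refine ⟨fun j => Nat.rec 0 (fun _ sj => sj + fastGrowing k (m + sj)) j, rfl, fun j => rfl⟩
      have hsmono : Monotone s := monotone_nat_of_le_succ (fun j => by rw [hsstep]; omega)
      have hge : ∀ j, (fastGrowing k)^[j] m ≤ m + s j := by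
        intro j; induction j with
        | zero => simp [hs0]
        | succ j ihj =>
            rw [Function.iterate_succ_apply', hsstep]
            have := fg_mono k ihj
            omega
      have hsm : N ≤ s m := by
        obtain ⟨m0, rfl⟩ : ∃ m0, m = m0 + 1 := ⟨m - 1, by omega⟩
        have h1 : fastGrowing (k+1) (m0+1) = (fastGrowing k)^[m0+1] (m0+1) := rfl
        have h2 : (fastGrowing k)^[m0+1] (m0+1) ≤ s (m0+1) := by
          rw [Function.iterate_succ_apply', hsstep]
          have := fg_mono k (hge m0)
          omega
        exact (hN.trans_eq h1).trans h2
      set u : ℕ → ℕ := fun j => min (s j) N with hudef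
      have humono : Monotone u := fun i j hij => min_le_min (hsmono hij) le_rfl
      have hu0 : u 0 = 0 := by simp only [hudef, hs0]; omega
      have husucc : ∀ j, u j ≤ u (j+1) := fun j => humono (Nat.le_succ j)
      have huN : ∀ j, u j ≤ N := fun j => min_le_right _ _
      have huM : u m = N := min_eq_right hsm
      have hidx : ∀ j i, i ∈ Finset.Ico (u j) (u (j+1)) → i < N :=
        fun j i hi => lt_of_lt_of_le (Finset.mem_Ico.mp hi).2 (huN (j+1))
      -- inner estimates from the inductive hypothesis
      have hinner : ∀ j,
          (C ^ (k+1))⁻¹ * pNR p (u (j+1) - u j) (fun i => ‖x (u j + i)‖)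
              ≤ ‖∑ i ∈ Finset.Ico (u j) (u (j+1)), x i‖ ∧
            ‖∑ i ∈ Finset.Ico (u j) (u (j+1)), x i‖
              ≤ C ^ (k+1) * pNR p (u (j+1) - u j) (fun i => ‖x (u j + i)‖) := by
        intro j
        have huNj : u (j+1) ≤ N := huN (j+1)
        have hcount : u (j+1) - u j ≤ fastGrowing k (m + u j) := by
          by_cases hcase : N ≤ s j
          · have e1 : u j = N := min_eq_right hcase
            have e2 : u (j+1) = N := min_eq_right (hcase.trans (hsmono (Nat.le_succ j)))
            rw [e1, e2]
            simp
          · push_neg at hcase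
            have e1 : u j = s j := min_eq_left hcase.le
            have e2 : u (j+1) ≤ s (j+1) := min_le_left _ _
            have e3 := hsstep j
            rw [e1]
            omega
        have hsum := ih (m + u j) (u (j+1) - u j) (by omega) hcount (fun i => x (u j + i))
          (fun i hi => hfin (u j + i) (by omega))
          (fun i hi μ hμ => by
            have := hsupp (u j + i) (by omega) μ hμ
            omega)
          (fun i i' hii' hi' μ μ' h1 h2 =>
            hsucc (u j + i) (u j + i') (by omega) (by omega) μ μ' h1 h2)
        rw [Finset.sum_Ico_eq_sum_range]
        exact hsum
      -- nonzero coordinates of block sums come from some member of the block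
      have hYmem : ∀ (j μ : ℕ), e' μ (∑ i ∈ Finset.Ico (u j) (u (j+1)), x i) ≠ 0 →
          ∃ i, i ∈ Finset.Ico (u j) (u (j+1)) ∧ e' μ (x i) ≠ 0 := by
        intro j μ hμ
        rw [map_sum] at hμ
        obtain ⟨i, hi, hne⟩ := Finset.exists_ne_zero_of_sum_ne_zero hμ
        exact ⟨i, hi, hne⟩
      -- outer application of the asymptotic hypothesis to the m block sums
      have houter := hasym m (fun j : Fin m => ∑ i ∈ Finset.Ico (u ↑j) (u (↑j+1)), x i)
        (fun j => by
          apply Set.Finite.subset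
            (Set.Finite.biUnion (Finset.Ico (u ↑j) (u (↑j+1))).finite_toSet
              (fun i hi => hfin i (hidx ↑j i (Finset.mem_coe.mp hi))))
          intro μ hμ
          obtain ⟨i, hi, hne⟩ := hYmem ↑j μ hμ
          exact Set.mem_biUnion (Finset.mem_coe.mpr hi) hne)
        (fun j μ hμ => by
          obtain ⟨i, hi, hne⟩ := hYmem ↑j μ hμ
          have h1 := hsupp i (hidx ↑j i hi) μ hne
          omega)
        (fun j j' hjj' μ μ' h1 h2 => by
          obtain ⟨i, hi, hne⟩ := hYmem ↑j μ h1
          obtain ⟨i', hi', hne'⟩ := hYmem ↑j' μ' h2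
          have hlt : (↑j : ℕ) < ↑j' := hjj'
          have a1 : i < u (↑j+1) := (Finset.mem_Ico.mp hi).2
          have a2 : u ↑j' ≤ i' := (Finset.mem_Ico.mp hi').1
          have a3 : u (↑j+1) ≤ u ↑j' := humono hlt
          exact hsucc i i' (by omega) (hidx ↑j' i' hi') μ μ' hne hne')
      have hsumeq : (∑ j : Fin m, ∑ i ∈ Finset.Ico (u ↑j) (u (↑j+1)), x i)
          = ∑ i ∈ Finset.range N, x i := by
        rw [Fin.sum_univ_eq_sum_range (fun j => ∑ i ∈ Finset.Ico (u j) (u (j+1)), x i) m,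
          sum_Ico_tele x u humono m, hu0, huM, ← Finset.range_eq_Ico]
      have hpeq : pNorm p (fun j : Fin m => ‖∑ i ∈ Finset.Ico (u ↑j) (u (↑j+1)), x i‖)
          = pNR p m (fun j => ‖∑ i ∈ Finset.Ico (u j) (u (j+1)), x i‖) :=
        pNorm_eq_pNR p m (fun j => ‖∑ i ∈ Finset.Ico (u j) (u (j+1)), x i‖)
      rw [hsumeq, hpeq] at houter
      have hnest : pNR p m (fun j => pNR p (u (j+1) - u j) (fun i => ‖x (u j + i)‖))
          = pNR p N (fun i => ‖x i‖) := by
        have h := pNR_nested hp (fun i => ‖x i‖) m u hu0 husucc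
        rwa [huM] at h
      have hC0 : (0:ℝ) < C := lt_of_lt_of_le one_pos hC
      have hCk : (0:ℝ) < C ^ (k+1) := pow_pos hC0 _
      have hupper : pNR p m (fun j => ‖∑ i ∈ Finset.Ico (u j) (u (j+1)), x i‖)
          ≤ C ^ (k+1) * pNR p N (fun i => ‖x i‖) := by
        calc pNR p m (fun j => ‖∑ i ∈ Finset.Ico (u j) (u (j+1)), x i‖)
            ≤ pNR p m (fun j => C ^ (k+1) * pNR p (u (j+1) - u j) (fun i => ‖x (u j + i)‖)) :=
              pNR_mono hp (fun j _ => by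
                rw [abs_of_nonneg (norm_nonneg _)]
                exact (hinner j).2)
          _ = C ^ (k+1) * pNR p m (fun j => pNR p (u (j+1) - u j) (fun i => ‖x (u j + i)‖)) :=
              pNR_smul hp hCk.le m _
          _ = C ^ (k+1) * pNR p N (fun i => ‖x i‖) := by rw [hnest]
      have hlower : (C ^ (k+1))⁻¹ * pNR p N (fun i => ‖x i‖)
          ≤ pNR p m (fun j => ‖∑ i ∈ Finset.Ico (u j) (u (j+1)), x i‖) := by
        calc (C ^ (k+1))⁻¹ * pNR p N (fun i => ‖x i‖)
            = pNR p m (fun j => (C ^ (k+1))⁻¹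
                * pNR p (u (j+1) - u j) (fun i => ‖x (u j + i)‖)) := by
              rw [pNR_smul hp (inv_nonneg.mpr hCk.le) m _, hnest]
          _ ≤ pNR p m (fun j => ‖∑ i ∈ Finset.Ico (u j) (u (j+1)), x i‖) :=
              pNR_mono hp (fun j _ => by
                rw [abs_of_nonneg (mul_nonneg (inv_nonneg.mpr hCk.le) (pNR_nonneg _ _ _))]
                exact (hinner j).1)
      constructor
      · calc (C ^ (k+1+1))⁻¹ * pNR p N (fun i => ‖x i‖)
            = C⁻¹ * ((C ^ (k+1))⁻¹ * pNR p N (fun i => ‖x i‖)) := by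
              rw [pow_succ, mul_inv_rev, mul_assoc]
          _ ≤ C⁻¹ * pNR p m (fun j => ‖∑ i ∈ Finset.Ico (u j) (u (j+1)), x i‖) :=
              mul_le_mul_of_nonneg_left hlower (inv_nonneg.mpr hC0.le)
          _ ≤ ‖∑ i ∈ Finset.range N, x i‖ := houter.1
      · calc ‖∑ i ∈ Finset.range N, x i‖
            ≤ C * pNR p m (fun j => ‖∑ i ∈ Finset.Ico (u j) (u (j+1)), x i‖) := houter.2
          _ ≤ C * (C ^ (k+1) * pNR p N (fun i => ‖x i‖)) :=
              mul_le_mul_of_nonneg_left hupper hC0.le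
          _ = C ^ (k+1+1) * pNR p N (fun i => ‖x i‖) := by
              rw [← mul_assoc, mul_comm C (C ^ (k+1)), ← pow_succ]

end AuxFG

/-- In a `C`-asymptotic `ℓ_p` space with a 1-unconditional basis, for every
`k ≥ 0` and `n ≥ 1`, any `g_k(n)` normalized block vectors whose (finite) supports lie in
`(n, ∞)` (1-based; i.e. 0-based indices `≥ n`) and are successive, are `C^{k+1}`-equivalent
to the unit vector basis of `ℓ_p^{g_k(n)}`. -/
theorem fastGrowing_blocks_equiv_lp
    (X : Type*) [NormedAddCommGroup X] [NormedSpace ℝ X]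
    (e : ℕ → X) (e' : ℕ → StrongDual ℝ X) (hb : IsBasis1Unconditional e e')
    (p : ℝ≥0∞) (hp : 1 ≤ p) (C : ℝ) (hC : 1 ≤ C)
    (hasym : IsAsymptoticLp p C (fun m x => e' m x))
    (k n : ℕ) (hn : 1 ≤ n)
    (v : Fin (fastGrowing k n) → X)
    (hv_norm : ∀ i, ‖v i‖ = 1)
    (hv_fin : ∀ i, {m | e' m (v i) ≠ 0}.Finite)
    (hv_supp : ∀ i m, e' m (v i) ≠ 0 → n ≤ m)
    (hv_succ : ∀ (i j : Fin (fastGrowing k n)), i < j →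
      ∀ m m', e' m (v i) ≠ 0 → e' m' (v j) ≠ 0 → m < m') :
    ∀ a : Fin (fastGrowing k n) → ℝ,
      (C ^ (k + 1) : ℝ)⁻¹ * pNorm p a ≤ ‖∑ i, a i • v i‖ ∧
        ‖∑ i, a i • v i‖ ≤ C ^ (k + 1) * pNorm p a := by
  intro a
  have hcoord : ∀ y : X, (∀ μ, e' μ y = 0) → y = 0 := by
    intro y hy
    have h := hb.expansion y
    have hz : (fun μ => e' μ y • e μ) = fun _ => (0:X) :=
      funext fun μ => by rw [hy μ, zero_smul]
    rw [hz] at h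
    exact h.unique hasSum_zero
  have hvne : ∀ i, v i ≠ 0 := fun i h => by
    have h1 := hv_norm i
    rw [h, norm_zero] at h1
    exact one_ne_zero h1.symm
  have hvex : ∀ i, ∃ μ, e' μ (v i) ≠ 0 := by
    intro i
    by_contra hcon
    push_neg at hcon
    exact hvne i (hcoord _ hcon)
  have hstrong : ∀ (i : ℕ) (h : i < fastGrowing k n) (μ : ℕ),
      e' μ (v ⟨i, h⟩) ≠ 0 → n + i ≤ μ := by
    intro i
    induction i with
    | zero => intro h μ hμ; simpa using hv_supp ⟨0, h⟩ μ hμ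
    | succ i ihi =>
        intro h μ hμ
        have hi : i < fastGrowing k n := Nat.lt_of_succ_lt h
        obtain ⟨μ0, hμ0⟩ := hvex ⟨i, hi⟩
        have h1 : n + i ≤ μ0 := ihi hi μ0 hμ0
        have h2 : μ0 < μ :=
          hv_succ ⟨i, hi⟩ ⟨i+1, h⟩ (Fin.mk_lt_mk.mpr (Nat.lt_succ_self i)) μ0 μ hμ0 hμ
        omega
  obtain ⟨xx, hxxlt⟩ : ∃ xx : ℕ → X, ∀ (i : ℕ) (h : i < fastGrowing k n),
      xx i = a ⟨i, h⟩ • v ⟨i, h⟩ :=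
    ⟨fun i => if h : i < fastGrowing k n then a ⟨i, h⟩ • v ⟨i, h⟩ else 0,
      fun i h => dif_pos h⟩
  have hsm : ∀ (i : ℕ) (h : i < fastGrowing k n) (μ : ℕ),
      e' μ (xx i) ≠ 0 → e' μ (v ⟨i, h⟩) ≠ 0 := by
    intro i h μ hμ hz
    rw [hxxlt i h, map_smul, hz, smul_zero] at hμ
    exact hμ rfl
  have hm := AuxFG.main e' p hp C hC hasym k n (fastGrowing k n) hn le_rfl xx
    (fun i hi => (hv_fin ⟨i, hi⟩).subset (fun μ hμ => hsm i hi μ hμ))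
    (fun i hi μ hμ => hstrong i hi μ (hsm i hi μ hμ))
    (fun i j hij hj μ μ' h1 h2 =>
      hv_succ ⟨i, lt_trans hij hj⟩ ⟨j, hj⟩ (Fin.mk_lt_mk.mpr hij) μ μ'
        (hsm i (lt_trans hij hj) μ h1) (hsm j hj μ' h2))
  have hsum : (∑ i ∈ Finset.range (fastGrowing k n), xx i) = ∑ i : Fin (fastGrowing k n), a i • v i := by
    rw [← Fin.sum_univ_eq_sum_range xx (fastGrowing k n)]
    exact Finset.sum_congr rfl (fun j _ => by rw [hxxlt ↑j j.isLt, Fin.eta])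
  have hnorm : ∀ j : Fin (fastGrowing k n), ‖xx ↑j‖ = |a j| := fun j => by
    rw [hxxlt ↑j j.isLt, Fin.eta, norm_smul, hv_norm, mul_one, Real.norm_eq_abs]
  have hpn : AuxFG.pNR p (fastGrowing k n) (fun i => ‖xx i‖) = pNorm p a := by
    rw [← AuxFG.pNorm_eq_pNR p (fastGrowing k n) (fun i => ‖xx i‖)]
    have h1 : (fun j : Fin (fastGrowing k n) => ‖xx ↑j‖) = fun j => |a j| := funext hnorm
    rw [h1]
    simp [pNorm, Real.nnnorm_abs, abs_abs]
  rw [hsum, hpn] at hm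
  exact hm
end

section
/- For n ≥ 2 put p_n = n/(n−1) and let E = (⊕_{n=2}^∞ ℓ_{p_n}^n)_{c0}, equipped with its natural normalized 1-unconditional basis (the concatenation of the unit vector bases of the ℓ_{p_n}^n), and let X = E(c0) be the E-direct sum of countably many copies of c0. Then for every natural number n one has ι_{1/2}^n B_{X*} ≠ ∅; consequently Sz(X, 1/2) > ω and hence Sz(X) > ω. -/
open Filter Topology Set
open scoped ENNReal NNReal

section SzlenkAuxLemmas

open NormedSpace

variable {Z : Type*} [NormedAddCommGroup Z] [NormedSpace ℝ Z]

lemma szlenkDeriv_iterate_subset (ε : ℝ) (K : Set (StrongDual ℝ Z)) :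
    ∀ i, (szlenkDeriv ε)^[i] K ⊆ K := by
  intro i
  induction i with
  | zero => simp
  | succ i ih =>
    rw [Function.iterate_succ_apply']
    exact fun f hf => ih hf.1

lemma mem_szlenkDeriv_of_seq {ε c : ℝ} (hc : ε < c) {K : Set (StrongDual ℝ Z)}
    (hKb : K ⊆ dualUnitBall Z) {f : StrongDual ℝ Z} (hf : f ∈ K)
    (g : ℕ → StrongDual ℝ Z) (hg : ∀ k, g k ∈ K) (hdist : ∀ k, c ≤ dist (g k) f)
    (htend : Filter.Tendsto (fun k => StrongDual.toWeakDual (g k)) Filter.atTop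
      (𝓝 (StrongDual.toWeakDual f))) :
    f ∈ szlenkDeriv ε K := by
  refine ⟨hf, fun U hU hfU => ?_⟩
  obtain ⟨k, hk⟩ := (htend.eventually (hU.mem_nhds hfU)).exists
  have hbdd : Bornology.IsBounded
      {g | g ∈ K ∧ StrongDual.toWeakDual g ∈ U} :=
    (Metric.isBounded_closedBall (x := (0 : StrongDual ℝ Z)) (r := 1)).subset
      fun h hh => hKb hh.1
  calc ε < c := hc
    _ ≤ dist (g k) f := hdist k
    _ ≤ _ := Metric.dist_le_diam_of_mem hbdd ⟨hg k, hk⟩ ⟨hf, hfU⟩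

lemma proj_norm_le {e : ℕ → Z} {e' : ℕ → StrongDual ℝ Z}
    (hb : IsBasis1Unconditional e e') (x : Z) (F : Finset ℕ) :
    ‖∑ m ∈ F, e' m x • e m‖ ≤ ‖x‖ := by
  classical
  set σ : ℕ → ℝ := fun m => if m ∈ F then 1 else -1 with hσ
  obtain ⟨y, hy, hyx⟩ := hb.unconditional x σ
    (fun m => by by_cases h : m ∈ F <;> simp [σ, h])
  have hx := hb.expansion x
  have hsum := (hx.add hy).const_smul ((1:ℝ)/2)
  have heq : (fun m => ((1:ℝ)/2) • (e' m x • e m + (σ m * e' m x) • e m))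
      = fun m => if m ∈ F then e' m x • e m else 0 := by
    funext m
    by_cases h : m ∈ F
    · simp only [hσ, if_pos h, one_mul, if_pos h]
      module
    · simp only [hσ, if_neg h, if_neg h]
      module
  rw [heq] at hsum
  have h2 : HasSum (fun m => if m ∈ F then e' m x • e m else 0)
      (∑ m ∈ F, if m ∈ F then e' m x • e m else 0) :=
    hasSum_sum_of_ne_finset_zero (fun m hm => by simp [hm])
  have h3 := hsum.unique h2
  have h4 : ∑ m ∈ F, e' m x • e m = ((1:ℝ)/2) • (x + y) := by
    rw [h3]
    exact (Finset.sum_congr rfl fun m hm => (if_pos hm).symm)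
  rw [h4]
  calc ‖((1:ℝ)/2) • (x + y)‖ = (1/2) * ‖x + y‖ := by
        rw [norm_smul]; norm_num
    _ ≤ (1/2) * (‖x‖ + ‖y‖) := by
        have := norm_add_le x y; nlinarith
    _ = ‖x‖ := by rw [hyx]; ring

lemma blockStart_succ (j : ℕ) : (j+1) * ((j+1)+3) / 2 = j * (j+3) / 2 + (j + 2) := by
  have h : (j+1) * ((j+1)+3) = j * (j+3) + 2 * (j + 2) := by ring
  rw [h, Nat.add_mul_div_left _ _ (by norm_num : 0 < 2)]

lemma blockStart_mono : Monotone (fun j : ℕ => j * (j+3) / 2) :=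
  monotone_nat_of_le_succ fun j => by
    rw [blockStart_succ j]; omega

lemma blockEnd_le {j k : ℕ} (h : j < k) : j * (j+3) / 2 + j + 2 ≤ k * (k+3) / 2 := by
  have h1 := blockStart_succ j
  have h2 : (j+1) * ((j+1)+3) / 2 ≤ k * (k+3) / 2 :=
    blockStart_mono (show j+1 ≤ k by omega)
  omega

lemma sum_le_rpow_mul {i : ℕ} {p q : ℝ} (hpq : Real.HolderConjugate p q) (b : ℕ → ℝ)
    (hb : ∀ t, 0 ≤ b t) :
    ∑ t ∈ Finset.range i, b t
      ≤ ((i:ℝ)) ^ (1/q) * (∑ t ∈ Finset.range i, b t ^ p) ^ (1/p) := by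
  have h := Real.inner_le_Lp_mul_Lq_of_nonneg (s := Finset.range i) (f := b)
    (g := fun _ => 1) hpq (fun t _ => hb t) (fun t _ => zero_le_one)
  simp only [mul_one, Real.one_rpow, Finset.sum_const, Finset.card_range,
    nsmul_eq_mul] at h
  rw [mul_comm]
  simpa using h

end SzlenkAuxLemmas

/-- For `n ≥ 2` put `pₙ = n/(n−1)` and let `E = (⊕ₙ ℓ_{pₙ}ⁿ)_{c₀}` with its
natural normalized 1-unconditional basis: the `j`-th block (`j = 0, 1, 2, …`, corresponding to
`n = j + 2`) has length `j+2`, occupies the coordinates `[j(j+3)/2, j(j+3)/2 + j + 2)`, and the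
norm of a finitely supported vector is the supremum of the `ℓ_{p_{j+2}}` norms of its blocks.
Let `X = E(c₀)` be the `E`-direct sum of countably many copies of `c₀`. Then
`ι_{1/2}^n B_{X*} ≠ ∅` for every `n : ℕ` (consequently `Sz(X, 1/2) > ω`, so `Sz(X) > ω`). -/
theorem szlenk_of_c0Sum_lpnn_of_c0
    (E : Type*) [NormedAddCommGroup E] [NormedSpace ℝ E] [CompleteSpace E]
    (e : ℕ → E) (e' : ℕ → StrongDual ℝ E)
    (hb : IsBasis1Unconditional e e') (hnorm : ∀ n, ‖e n‖ = 1)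
    (hE : ∀ a : ℕ →₀ ℝ,
      ‖a.sum (fun m c => c • e m)‖ =
        ⨆ j : ℕ, (∑ m ∈ Finset.Ico (j * (j+3) / 2) (j * (j+3) / 2 + j + 2),
          |a m| ^ (((j:ℝ) + 2) / ((j:ℝ) + 1))) ^ (((j:ℝ) + 1) / ((j:ℝ) + 2)))
    (Y : Type*) [NormedAddCommGroup Y] [NormedSpace ℝ Y] [CompleteSpace Y]
    (T : Y →ₗ[ℝ] ∀ _ : ℕ, ZeroAtInftyContinuousMap ℕ ℝ)
    (hT : IsDirectSumE e (fun _ => ZeroAtInftyContinuousMap ℕ ℝ) T) :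
    ∀ n : ℕ, ((szlenkDeriv (1/2))^[n] (dualUnitBall Y)).Nonempty := by
  classical
  intro n
  set N : ℕ := n + 2 with hNdef
  set p : ℝ := ((n:ℝ) + 2) / ((n:ℝ) + 1) with hpdef
  have hNcast : ((N:ℕ) : ℝ) = (n:ℝ) + 2 := by rw [hNdef]; push_cast; ring
  have hNpos : (0:ℝ) < (N:ℝ) := by rw [hNcast]; positivity
  set c : ℝ := ((N:ℝ)) ^ (-((1:ℝ)/(N:ℝ))) with hcdef
  have hcpos : 0 < c := Real.rpow_pos_of_pos hNpos _
  have hcmul : c * (N:ℝ) ^ ((1:ℝ)/(N:ℝ)) = 1 := by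
    rw [hcdef, ← Real.rpow_add hNpos]; simp
  have hchalf : 1/2 < c := by
    have h2 : (N:ℝ) ^ ((1:ℝ)/(N:ℝ)) < 2 := by
      have hlt : (N:ℝ) < 2 ^ ((N:ℕ):ℝ) := by
        have h := Nat.lt_two_pow_self (n := N)
        calc (N:ℝ) < ((2^N : ℕ) : ℝ) := by exact_mod_cast h
          _ = 2 ^ ((N:ℕ):ℝ) := by rw [Real.rpow_natCast]; push_cast; ring
      calc (N:ℝ) ^ ((1:ℝ)/(N:ℝ)) < (2 ^ ((N:ℕ):ℝ)) ^ ((1:ℝ)/(N:ℝ)) :=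
            Real.rpow_lt_rpow (le_of_lt hNpos) hlt (by positivity)
        _ = 2 := by
            rw [← Real.rpow_mul (by norm_num), mul_one_div, div_self hNpos.ne',
              Real.rpow_one]
    have hz : (0:ℝ) < (N:ℝ) ^ ((1:ℝ)/(N:ℝ)) := Real.rpow_pos_of_pos hNpos _
    have hzinv : (N:ℝ) ^ ((1:ℝ)/(N:ℝ)) * c = 1 := by rw [mul_comm]; exact hcmul
    nlinarith
  have hpq : Real.HolderConjugate p (N:ℝ) := by
    rw [Real.holderConjugate_iff]
    constructor
    · rw [hpdef, lt_div_iff₀ (by positivity)]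
      nlinarith [(by positivity : (0:ℝ) ≤ (n:ℝ))]
    · rw [hpdef, hNcast]
      have h1 : (n:ℝ) + 1 > 0 := by positivity
      have h2 : (n:ℝ) + 2 > 0 := by positivity
      field_simp
      ring
  have hppos : 0 < p := hpq.pos
  -- basic facts about T
  have hsummable : ∀ y : Y, Summable (fun m => ‖T y m‖ • e m) := by
    intro y
    have h : T y ∈ Set.range T := Set.mem_range_self y
    rw [hT.range_eq] at h; exact h
  have hcoeff : ∀ (y : Y) (m : ℕ), e' m (∑' m', ‖T y m'‖ • e m') = ‖T y m‖ := by
    intro y m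
    rw [ContinuousLinearMap.map_tsum _ (hsummable y)]
    have h1 : ∀ m', (e' m) (‖T y m'‖ • e m') = if m' = m then ‖T y m‖ else 0 := by
      intro m'
      rw [map_smul, smul_eq_mul, hb.biorth m m']
      by_cases h : m' = m
      · simp [h]
      · simp [h, Ne.symm h]
    calc ∑' m', (e' m) (‖T y m'‖ • e m')
        = ∑' m', if m' = m then ‖T y m‖ else 0 := tsum_congr h1
      _ = ‖T y m‖ := tsum_ite_eq m _
  have hcoeff_le : ∀ (y : Y) (m : ℕ), ‖T y m‖ ≤ ‖y‖ := by
    intro y m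
    have h := proj_norm_le hb (∑' m', ‖T y m'‖ • e m') {m}
    rw [Finset.sum_singleton, hcoeff, norm_smul, Real.norm_eq_abs,
      abs_of_nonneg (norm_nonneg _), hnorm, mul_one] at h
    rw [hT.norm_eq y]; exact h
  have heval_le : ∀ (y : Y) (m k : ℕ), |T y m k| ≤ ‖T y m‖ := by
    intro y m k
    have h := BoundedContinuousFunction.norm_coe_le_norm (T y m).toBCF k
    rw [ZeroAtInftyContinuousMap.norm_toBCF_eq_norm] at h
    simpa using h
  set base : ℕ := n * (n + 3) / 2 with hbase
  -- the functionals
  have hφex : ∀ (i : ℕ) (k : ℕ → ℕ), ∃ f : StrongDual ℝ Y,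
      ∀ y, f y = c * ∑ t ∈ Finset.range i, T y (base + t) (k t) := by
    intro i k
    have hbound : ∀ y : Y,
        ‖c * ∑ t ∈ Finset.range i, T y (base + t) (k t)‖ ≤ c * i * ‖y‖ := by
      intro y
      rw [Real.norm_eq_abs, abs_mul, abs_of_nonneg hcpos.le]
      have h1 : |∑ t ∈ Finset.range i, T y (base + t) (k t)| ≤ (i:ℝ) * ‖y‖ := by
        calc |∑ t ∈ Finset.range i, T y (base + t) (k t)|
            ≤ ∑ t ∈ Finset.range i, |T y (base + t) (k t)| :=
              Finset.abs_sum_le_sum_abs _ _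
          _ ≤ ∑ t ∈ Finset.range i, ‖y‖ := by
              refine Finset.sum_le_sum fun t _ => ?_
              exact (heval_le y _ _).trans (hcoeff_le y _)
          _ = (i:ℝ) * ‖y‖ := by
              rw [Finset.sum_const, Finset.card_range, nsmul_eq_mul]
      calc c * |∑ t ∈ Finset.range i, T y (base + t) (k t)|
          ≤ c * ((i:ℝ) * ‖y‖) := by
            exact mul_le_mul_of_nonneg_left h1 hcpos.le
        _ = c * i * ‖y‖ := by ring
    refine ⟨LinearMap.mkContinuous
      { toFun := fun y => c * ∑ t ∈ Finset.range i, T y (base + t) (k t)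
        map_add' := fun y z => by
          simp only [map_add, Pi.add_apply, ZeroAtInftyContinuousMap.coe_add]
          rw [← mul_add, ← Finset.sum_add_distrib]
        map_smul' := fun r y => by
          have hsm : ∀ t : ℕ, ((r • T y (base + t)) : ZeroAtInftyContinuousMap ℕ ℝ) (k t)
              = r * T y (base + t) (k t) := fun t => rfl
          simp only [map_smul, Pi.smul_apply, RingHom.id_apply, smul_eq_mul, hsm,
            Finset.mul_sum]
          exact Finset.sum_congr rfl fun t _ => by ring }
      (c * i) hbound, fun y => rfl⟩
  choose φ hφ using hφex
  -- the crucial norm estimate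
  have hφnorm : ∀ i, i ≤ N → ∀ k, ‖φ i k‖ ≤ 1 := by
    intro i hi k
    refine ContinuousLinearMap.opNorm_le_bound _ zero_le_one fun y => ?_
    rw [hφ, one_mul, Real.norm_eq_abs]
    set S : ℝ := ∑ t ∈ Finset.range i, ‖T y (base + t)‖ ^ p with hSdef
    have hSnn : 0 ≤ S := Finset.sum_nonneg fun t _ => Real.rpow_nonneg (norm_nonneg _) _
    -- step 1: S ^ (1/p) ≤ ‖y‖
    have hS1 : S ^ (1/p) ≤ ‖y‖ := by
      set F : Finset ℕ := Finset.Ico base (base + i) with hF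
      set a : ℕ →₀ ℝ := Finsupp.onFinset F (fun m => if m ∈ F then ‖T y m‖ else 0)
        (fun m h => by by_contra hm; exact h (if_neg hm)) with ha
      have haap : ∀ m, a m = if m ∈ F then ‖T y m‖ else 0 := fun m => rfl
      have hasum : a.sum (fun m r => r • e m) = ∑ m ∈ F, ‖T y m‖ • e m := by
        rw [Finsupp.sum_of_support_subset a Finsupp.support_onFinset_subset _
          (fun m _ => zero_smul ℝ (e m))]
        exact Finset.sum_congr rfl fun m hm => by rw [haap, if_pos hm]
      have hle : ‖a.sum (fun m r => r • e m)‖ ≤ ‖y‖ := by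
        rw [hasum, hT.norm_eq y]
        have h := proj_norm_le hb (∑' m', ‖T y m'‖ • e m') F
        rw [show (∑ m ∈ F, e' m (∑' m', ‖T y m'‖ • e m') • e m)
            = ∑ m ∈ F, ‖T y m‖ • e m from
          Finset.sum_congr rfl fun m _ => by rw [hcoeff]] at h
        exact h
      set gfun : ℕ → ℝ := fun j =>
        (∑ m ∈ Finset.Ico (j * (j+3) / 2) (j * (j+3) / 2 + j + 2),
          |a m| ^ (((j:ℝ) + 2) / ((j:ℝ) + 1))) ^ (((j:ℝ) + 1) / ((j:ℝ) + 2)) with hgfun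
      have hEeq : ‖a.sum (fun m r => r • e m)‖ = ⨆ j, gfun j := hE a
      have hg0 : ∀ j, j ≠ n → gfun j = 0 := by
        intro j hj
        have hzero : ∀ m ∈ Finset.Ico (j * (j+3) / 2) (j * (j+3) / 2 + j + 2),
            a m = 0 := by
          intro m hm
          rw [haap, if_neg]
          intro hmF
          rw [Finset.mem_Ico] at hm hmF
          rcases lt_or_gt_of_ne hj with h | h
          · have := blockEnd_le h
            omega
          · have := blockEnd_le h
            omega
        simp only [hgfun]
        rw [Finset.sum_congr rfl (fun m hm => by
          rw [hzero m hm, abs_zero, Real.zero_rpow (by positivity)])]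
        rw [Finset.sum_const_zero, Real.zero_rpow (by positivity)]
      have hSgn : gfun n = S ^ (1/p) := by
        simp only [hgfun]
        have houter : ((n:ℝ) + 1) / ((n:ℝ) + 2) = 1/p := by
          rw [hpdef, one_div_div]
        have hsplit : base ≤ base + i ∧ base + i ≤ base + n + 2 := ⟨by omega, by omega⟩
        have hIco : n * (n+3) / 2 + n + 2 = base + n + 2 := by omega
        have hinner : ∑ m ∈ Finset.Ico (n * (n+3) / 2) (n * (n+3) / 2 + n + 2),
            |a m| ^ (((n:ℝ) + 2) / ((n:ℝ) + 1)) = S := by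
          rw [show n * (n+3) / 2 = base from rfl, hIco,
            show base + n + 2 = base + (n + 2) from by omega]
          rw [← Finset.sum_Ico_consecutive _ (show base ≤ base + i by omega)
            (show base + i ≤ base + (n+2) by omega)]
          have hzer : ∑ m ∈ Finset.Ico (base + i) (base + (n+2)),
              |a m| ^ (((n:ℝ) + 2) / ((n:ℝ) + 1)) = 0 := by
            refine Finset.sum_eq_zero fun m hm => ?_
            rw [Finset.mem_Ico] at hm
            rw [haap, if_neg (by rw [hF, Finset.mem_Ico]; omega), abs_zero,
              Real.zero_rpow (by positivity)]
          rw [hzer, add_zero]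
          rw [Finset.sum_Ico_eq_sum_range]
          rw [show base + i - base = i from by omega]
          rw [hSdef, ← hpdef]
          refine Finset.sum_congr rfl fun t ht => ?_
          rw [Finset.mem_range] at ht
          rw [haap, if_pos (by rw [hF, Finset.mem_Ico]; omega),
            abs_of_nonneg (norm_nonneg _)]
        rw [hinner, houter]
      have hbddg : BddAbove (Set.range gfun) := by
        refine ⟨max (gfun n) 0, ?_⟩
        rintro _ ⟨j, rfl⟩
        by_cases h : j = n
        · subst h; exact le_max_left _ _
        · rw [hg0 j h]; exact le_max_right _ _
      have hsup_ge : gfun n ≤ ⨆ j, gfun j := le_ciSup hbddg n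
      calc S ^ (1/p) = gfun n := hSgn.symm
        _ ≤ ⨆ j, gfun j := hsup_ge
        _ = ‖a.sum (fun m r => r • e m)‖ := hEeq.symm
        _ ≤ ‖y‖ := hle
    -- step 2: Hölder
    have h2 : ∑ t ∈ Finset.range i, ‖T y (base + t)‖
        ≤ (N:ℝ) ^ ((1:ℝ)/(N:ℝ)) * S ^ (1/p) := by
      have hH := sum_le_rpow_mul (i := i) hpq (fun t => ‖T y (base + t)‖)
        (fun t => norm_nonneg _)
      refine hH.trans ?_
      have : ((i:ℝ)) ^ ((1:ℝ)/(N:ℝ)) ≤ ((N:ℝ)) ^ ((1:ℝ)/(N:ℝ)) :=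
        Real.rpow_le_rpow (Nat.cast_nonneg i) (by exact_mod_cast hi) (by positivity)
      have hSp : 0 ≤ S ^ (1/p) := Real.rpow_nonneg hSnn _
      calc ((i:ℝ)) ^ (1/(N:ℝ)) * S ^ (1/p)
          ≤ ((N:ℝ)) ^ (1/(N:ℝ)) * S ^ (1/p) := by
            exact mul_le_mul_of_nonneg_right this hSp
        _ = (N:ℝ) ^ ((1:ℝ)/(N:ℝ)) * S ^ (1/p) := rfl
    calc |c * ∑ t ∈ Finset.range i, T y (base + t) (k t)|
        ≤ c * ∑ t ∈ Finset.range i, ‖T y (base + t)‖ := by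
          rw [abs_mul, abs_of_nonneg hcpos.le]
          refine mul_le_mul_of_nonneg_left ?_ hcpos.le
          calc |∑ t ∈ Finset.range i, T y (base + t) (k t)|
              ≤ ∑ t ∈ Finset.range i, |T y (base + t) (k t)| :=
                Finset.abs_sum_le_sum_abs _ _
            _ ≤ ∑ t ∈ Finset.range i, ‖T y (base + t)‖ :=
                Finset.sum_le_sum fun t _ => heval_le y _ _
      _ ≤ c * ((N:ℝ) ^ ((1:ℝ)/(N:ℝ)) * S ^ (1/p)) :=
          mul_le_mul_of_nonneg_left h2 hcpos.le
      _ = (c * (N:ℝ) ^ ((1:ℝ)/(N:ℝ))) * S ^ (1/p) := by ring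
      _ = S ^ (1/p) := by rw [hcmul, one_mul]
      _ ≤ ‖y‖ := hS1
  -- evaluation vectors
  have hδex : ∀ (M k : ℕ), ∃ y : Y, ‖y‖ = 1 ∧ (∀ m, m ≠ M → T y m = 0) ∧
      (∀ k', T y M k' = if k' = k then 1 else 0) := by
    intro M k
    set δ : ZeroAtInftyContinuousMap ℕ ℝ :=
      { toFun := fun k' => if k' = k then (1:ℝ) else 0
        continuous_toFun := continuous_of_discreteTopology
        zero_at_infty' := by
          rw [cocompact_eq_cofinite, Nat.cofinite_eq_atTop]
          refine tendsto_const_nhds.congr' ?_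
          filter_upwards [eventually_gt_atTop k] with k' hk'
          simp [hk'.ne'] } with hδdef
    have hδap : ∀ k', δ k' = if k' = k then (1:ℝ) else 0 := fun k' => rfl
    have hδnorm : ‖δ‖ = 1 := by
      rw [← ZeroAtInftyContinuousMap.norm_toBCF_eq_norm]
      apply le_antisymm
      · rw [BoundedContinuousFunction.norm_le zero_le_one]
        intro k'
        have : δ.toBCF k' = δ k' := rfl
        rw [this, hδap, Real.norm_eq_abs]
        by_cases h : k' = k <;> simp [h]
      · have h := BoundedContinuousFunction.norm_coe_le_norm δ.toBCF k
        have h2 : δ.toBCF k = δ k := rfl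
        rw [h2, hδap, if_pos rfl, Real.norm_eq_abs] at h
        simpa using h
    set x0 : ∀ _ : ℕ, ZeroAtInftyContinuousMap ℕ ℝ :=
      (fun m => if m = M then δ else 0) with hx0
    have hx0ap : ∀ m, x0 m = if m = M then δ else 0 := fun m => rfl
    have hx0mem : x0 ∈ Set.range T := by
      rw [hT.range_eq]
      refine summable_of_ne_finset_zero (s := {M}) ?_
      intro m hm
      have hne : m ≠ M := by simpa using hm
      rw [hx0ap, if_neg hne]
      simp
    obtain ⟨y, hy⟩ := hx0mem
    refine ⟨y, ?_, ?_, ?_⟩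
    · rw [hT.norm_eq y, hy]
      rw [tsum_eq_sum (s := {M}) (f := fun m => ‖x0 m‖ • e m) (fun m hm => by
        have hne : m ≠ M := by simpa using hm
        simp [hx0ap, hne])]
      rw [Finset.sum_singleton, hx0ap, if_pos rfl, hδnorm, one_smul, hnorm]
    · intro m hm; rw [hy, hx0ap, if_neg hm]
    · intro k'; rw [hy, hx0ap, if_pos rfl]; exact hδap k'
  -- difference of successive functionals
  have hdiff : ∀ (i : ℕ) (k : ℕ → ℕ) (m : ℕ) (y : Y),
      φ (i+1) (Function.update k i m) y - φ i k y = c * T y (base + i) m := by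
    intro i k m y
    rw [hφ, hφ, Finset.sum_range_succ]
    rw [Finset.sum_congr rfl (fun t ht =>
      by rw [Function.update_of_ne (Finset.mem_range.mp ht).ne])]
    rw [Function.update_self]
    ring
  -- distance lower bound
  have hdist : ∀ (i : ℕ) (k : ℕ → ℕ) (m : ℕ),
      c ≤ dist (φ (i+1) (Function.update k i m)) (φ i k) := by
    intro i k m
    obtain ⟨y, hy1, _, hy3⟩ := hδex (base + i) m
    have h := (φ (i+1) (Function.update k i m) - φ i k).unit_le_opNorm y (le_of_eq hy1)
    rw [ContinuousLinearMap.sub_apply] at h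
    rw [dist_eq_norm]
    refine le_trans ?_ h
    rw [Real.norm_eq_abs, hdiff, hy3, if_pos rfl, mul_one, abs_of_nonneg hcpos.le]
  -- weak-star convergence
  have htend : ∀ (i : ℕ) (k : ℕ → ℕ),
      Tendsto (fun m => StrongDual.toWeakDual (φ (i+1) (Function.update k i m)))
        atTop (𝓝 (StrongDual.toWeakDual (φ i k))) := by
    intro i k
    rw [tendsto_iff_forall_eval_tendsto_topDualPairing]
    intro y
    have hz := (T y (base + i)).zero_at_infty'
    rw [cocompact_eq_cofinite, Nat.cofinite_eq_atTop] at hz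
    have h1 : Tendsto (fun m => φ i k y + c * T y (base + i) m) atTop
        (𝓝 (φ i k y + c * 0)) :=
      tendsto_const_nhds.add (hz.const_mul c)
    rw [mul_zero, add_zero] at h1
    refine h1.congr fun m => ?_
    have h := hdiff i k m y
    have : φ (i+1) (Function.update k i m) y = φ i k y + c * T y (base + i) m := by
      linarith
    rw [← this]
    rfl
  -- the main induction
  have main : ∀ (d i : ℕ) (k : ℕ → ℕ), i + d ≤ n →
      φ i k ∈ (szlenkDeriv (1/2))^[d] (dualUnitBall Y) := by
    intro d
    induction d with
    | zero =>
      intro i k hik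
      simp only [Function.iterate_zero, id_eq]
      exact mem_closedBall_zero_iff.mpr (hφnorm i (by omega) k)
    | succ d ih =>
      intro i k hik
      rw [Function.iterate_succ_apply']
      exact mem_szlenkDeriv_of_seq hchalf
        (szlenkDeriv_iterate_subset _ _ d)
        (ih i k (by omega))
        (fun m => φ (i+1) (Function.update k i m))
        (fun m => ih (i+1) (Function.update k i m) (by omega))
        (fun m => hdist i k m)
        (htend i k)
  exact ⟨φ 0 (fun _ => 0), main n 0 _ (by omega)⟩
end
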